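/- With F(v) = (a·v + √Q·b)²/(σ² + a²(P − v²)), the set {v : 0 ≤ v ≤ √P, F(v) ≥ ρ} is nonempty if and only if (√P·a + √Q·b)²/σ² ≥ ρ. -/
import Mathlib


/-- Feasibility of the single-variable reformulation of (P-S4):
`{v : 0 ≤ v ≤ √P, F(v) ≥ ρ}` is nonempty iff `(√P a + √Q b)² / σ² ≥ ρ`. -/
theorem stmt_8 (a b P Q σ2 ρ : ℝ) (ha : 0 < a) (hb : 0 < b) (hP : 0 < P)
    (hQ : 0 < Q) (hσ : 0 < σ2) (hρ : 0 < ρ)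
    (F : ℝ → ℝ)
    (hF : ∀ v : ℝ, F v =
      (a * v + Real.sqrt Q * b) ^ 2 / (σ2 + a ^ 2 * (P - v ^ 2))) :
    {v : ℝ | 0 ≤ v ∧ v ≤ Real.sqrt P ∧ F v ≥ ρ}.Nonempty ↔
      (Real.sqrt P * a + Real.sqrt Q * b) ^ 2 / σ2 ≥ ρ := by
  have hsP : Real.sqrt P ^ 2 = P := Real.sq_sqrt hP.le
  have hQb : 0 ≤ Real.sqrt Q * b := mul_nonneg (Real.sqrt_nonneg _) hb.le
  constructor
  · rintro ⟨v, hv0, hvP, hFv⟩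
    have hv2 : v ^ 2 ≤ P := by
      calc v ^ 2 ≤ Real.sqrt P ^ 2 := pow_le_pow_left₀ hv0 hvP 2
        _ = P := hsP
    have hD : σ2 ≤ σ2 + a ^ 2 * (P - v ^ 2) := by nlinarith
    have hnum : (a * v + Real.sqrt Q * b) ^ 2 ≤ (Real.sqrt P * a + Real.sqrt Q * b) ^ 2 := by
      have hav : a * v ≤ Real.sqrt P * a := by nlinarith
      nlinarith [mul_nonneg ha.le hv0]
    rw [hF v] at hFv
    calc ρ ≤ (a * v + Real.sqrt Q * b) ^ 2 / (σ2 + a ^ 2 * (P - v ^ 2)) := hFv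
      _ ≤ (a * v + Real.sqrt Q * b) ^ 2 / σ2 :=
        div_le_div_of_nonneg_left (by positivity) hσ hD
      _ ≤ (Real.sqrt P * a + Real.sqrt Q * b) ^ 2 / σ2 := by gcongr
  · intro h
    refine ⟨Real.sqrt P, Real.sqrt_nonneg _, le_refl _, ?_⟩
    rw [hF]
    rw [hsP]
    simpa [mul_comm] using h
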